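/- For every n ≥ 2, the graph G⁺_{n,n} obtained from the n×n grid by replacing every edge with a path of length 3 has treewidth at most n+2. Moreover, there is a tree decomposition (T,β) of width at most n+2 such that every bag contains at most one original grid vertex, and any bag containing a grid vertex v equals {v} ∪ {(v,w) : vw an edge of the grid} and is attached at a leaf of T. -/

import Mathlib

open SimpleGraph
open scoped Classical

/-- The `n × n` grid graph: vertices at `L1`-distance `1` are adjacent. -/
def grid (n : ℕ) : SimpleGraph (Fin n × Fin n) :=
  SimpleGraph.fromRel (fun a b =>
    (a.1 = b.1 ∧ a.2.val + 1 = b.2.val) ∨ (a.2 = b.2 ∧ a.1.val + 1 = b.1.val))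

/-- Vertices of the subdivided grid `G⁺`: original grid vertices together with a
vertex `(v, w)` for every directed edge of the grid. -/
abbrev GridPlusVert (n : ℕ) :=
  (Fin n × Fin n) ⊕ {p : (Fin n × Fin n) × (Fin n × Fin n) // (grid n).Adj p.1 p.2}

/-- The grid where every edge `vw` is replaced by the path `v, (v,w), (w,v), w`. -/
def gridPlus (n : ℕ) : SimpleGraph (GridPlusVert n) :=
  SimpleGraph.fromRel (fun x y =>
    match x, y with
    | Sum.inl v, Sum.inr p => v = p.val.1
    | Sum.inr p, Sum.inr q => p.val.1 = q.val.2 ∧ p.val.2 = q.val.1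
    | _, _ => False)

/-- A tree decomposition of a graph `G` with bags indexed by `ι`. -/
structure TreeDecomp {V : Type*} (G : SimpleGraph V) (ι : Type*) where
  T : SimpleGraph ι
  tree : T.IsTree
  bag : ι → Set V
  bags_connected : ∀ v : V, (T.induce {i | v ∈ bag i}).Connected
  edge_subset : ∀ u v, G.Adj u v → ∃ i, u ∈ bag i ∧ v ∈ bag i

namespace TD14

/-! ### The caterpillar tree -/

def cat : SimpleGraph ℕ := SimpleGraph.fromRel (fun u v => (v = u+1 ∧ u%3 ≠ 2) ∨ (v = u+2 ∧ u%3 = 1))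

lemma cat_adj {u v : ℕ} : cat.Adj u v ↔ ((v = u+1 ∧ u%3 ≠ 2) ∨ (v = u+2 ∧ u%3=1) ∨ (u = v+1 ∧ v%3 ≠ 2) ∨ (u = v+2 ∧ v%3=1)) := by
  unfold cat; rw [SimpleGraph.fromRel_adj]; constructor
  · rintro ⟨h, h'⟩; tauto
  · intro h; refine ⟨by omega, by tauto⟩

lemma cat_reach0 : ∀ m, cat.Reachable 0 m := by
  intro m
  induction m using Nat.strong_induction_on with
  | _ m ih =>
    rcases Nat.eq_zero_or_pos m with rfl | hm
    · exact Reachable.refl 0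
    · by_cases h0 : m % 3 = 0
      · have hadj : cat.Adj (m-2) m := by rw [cat_adj]; omega
        exact (ih (m-2) (by omega)).trans hadj.reachable
      · have hadj : cat.Adj (m-1) m := by rw [cat_adj]; omega
        exact (ih (m-1) (by omega)).trans hadj.reachable

lemma cat_connected : cat.Connected :=
  (connected_iff _).mpr ⟨fun a b => (cat_reach0 a).symm.trans (cat_reach0 b), ⟨0⟩⟩

lemma reach_invariant {V : Type*} {G : SimpleGraph V} (S : Set V)
    (h : ∀ a b, G.Adj a b → (a ∈ S ↔ b ∈ S)) {u v : V} (hr : G.Reachable u v) :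
    (u ∈ S ↔ v ∈ S) := by
  obtain ⟨w⟩ := hr
  induction w with
  | nil => rfl
  | cons ha _ ih => exact (h _ _ ha).trans ih

lemma cat_cut (u v : ℕ) (S : Set ℕ)
    (hS : ∀ a b, cat.Adj a b → ¬((a = u ∧ b = v) ∨ (a = v ∧ b = u)) → ((a ∈ S) ↔ (b ∈ S)))
    (hu : u ∈ S) (hv : v ∉ S) : ¬(cat \ SimpleGraph.fromEdgeSet {s(u,v)}).Reachable u v := by
  intro hr
  have hinv : ∀ a b, (cat \ SimpleGraph.fromEdgeSet {s(u,v)}).Adj a b → (a ∈ S ↔ b ∈ S) := by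
    intro a b hab
    rw [SimpleGraph.sdiff_adj, SimpleGraph.fromEdgeSet_adj, Set.mem_singleton_iff, Sym2.eq_iff] at hab
    exact hS a b hab.1 (fun h => hab.2 ⟨h, hab.1.ne⟩)
  exact hv ((reach_invariant S hinv hr).mp hu)

lemma cat_acyclic : cat.IsAcyclic := by
  rw [isAcyclic_iff_forall_adj_isBridge]
  intro u v huv
  rw [isBridge_iff]
  show ¬(cat \ SimpleGraph.fromEdgeSet {s(u,v)}).Reachable u v
  have h := cat_adj.mp huv
  rcases h with ⟨rfl, h2⟩ | ⟨rfl, h2⟩ | ⟨rfl, h2⟩ | ⟨rfl, h2⟩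
  · by_cases h0 : u % 3 = 0
    · refine cat_cut _ _ {x | x ≤ u} ?_ (by simp) (by simp)
      intro a b hab hne
      have := cat_adj.mp hab
      simp only [Set.mem_setOf_eq]; omega
    · refine cat_cut _ _ {x | ¬ x = u + 1} ?_ (by simp) (by simp)
      intro a b hab hne
      have := cat_adj.mp hab
      simp only [Set.mem_setOf_eq]; omega
  · refine cat_cut _ _ {x | x ≤ u + 1} ?_ (by simp) (by simp)
    intro a b hab hne
    have := cat_adj.mp hab
    simp only [Set.mem_setOf_eq]; omega
  · by_cases h0 : v % 3 = 0
    · refine cat_cut _ _ {x | v + 1 ≤ x} ?_ (by simp) (by simp)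
      intro a b hab hne
      have := cat_adj.mp hab
      simp only [Set.mem_setOf_eq]; omega
    · refine cat_cut _ _ {x | x = v + 1} ?_ (by simp) (by simp)
      intro a b hab hne
      have := cat_adj.mp hab
      simp only [Set.mem_setOf_eq]; omega
  · refine cat_cut _ _ {x | v + 2 ≤ x} ?_ (by simp) (by simp)
    intro a b hab hne
    have := cat_adj.mp hab
    simp only [Set.mem_setOf_eq]; omega

lemma cat_isTree : cat.IsTree := ⟨cat_connected, cat_acyclic⟩

/-! ### Positions -/

def kk (n : ℕ) (v : Fin n × Fin n) : ℕ := v.1.val * n + v.2.val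

lemma kk_inj {n : ℕ} {a b : Fin n × Fin n} (h : kk n a = kk n b) : a = b := by
  unfold kk at h
  have h2 : a.2.val = b.2.val := by
    have harg : a.2.val + n * a.1.val = b.2.val + n * b.1.val := by
      rw [Nat.mul_comm n a.1.val, Nat.mul_comm n b.1.val]; omega
    have h' : (a.2.val + n * a.1.val) % n = (b.2.val + n * b.1.val) % n := by rw [harg]
    rwa [Nat.add_mul_mod_self_left, Nat.add_mul_mod_self_left,
      Nat.mod_eq_of_lt a.2.isLt, Nat.mod_eq_of_lt b.2.isLt] at h'
  have h1 : a.1.val = b.1.val := by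
    have hn : 0 < n := a.2.pos
    have : a.1.val * n = b.1.val * n := by omega
    exact Nat.eq_of_mul_eq_mul_right hn this
  exact Prod.ext (Fin.ext h1) (Fin.ext h2)

lemma grid_adj_kk {n : ℕ} {a b : Fin n × Fin n} (h : (grid n).Adj a b) :
    kk n b = kk n a + 1 ∨ kk n b = kk n a + n ∨ kk n a = kk n b + 1 ∨ kk n a = kk n b + n := by
  unfold grid at h
  rw [SimpleGraph.fromRel_adj] at h
  unfold kk
  obtain ⟨-, (⟨h1, h2⟩ | ⟨h1, h2⟩) | (⟨h1, h2⟩ | ⟨h1, h2⟩)⟩ := h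
  · have e : a.1.val * n = b.1.val * n := by rw [h1]
    omega
  · have e : b.1.val * n = a.1.val * n + n := by rw [← h2]; ring
    have e2 : a.2.val = b.2.val := by rw [h1]
    omega
  · have e : b.1.val * n = a.1.val * n := by rw [h1]
    omega
  · have e : a.1.val * n = b.1.val * n + n := by rw [← h2]; ring
    have e2 : b.2.val = a.2.val := by rw [h1]
    omega

/-! ### Bags -/

def inBag (n m a b : ℕ) : Prop :=
  (b = a + n ∧ ((m % 3 = 0 ∧ a < m/3 ∧ m/3 ≤ a+n) ∨ (m % 3 = 1 ∧ a ≤ m/3 ∧ m/3 < a+n) ∨ m = 3*a+2))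
  ∨ (a = b + n ∧ (m = 3*a ∨ m = 3*a+1 ∨ m = 3*a+2))
  ∨ (b = a + 1 ∧ (m = 3*a+3 ∨ m = 3*a+1 ∨ m = 3*a+2))
  ∨ (a = b + 1 ∧ (m = 3*a ∨ m = 3*a+1 ∨ m = 3*a+2))

def bag (n : ℕ) (m : ℕ) : Set (GridPlusVert n) := {x | match x with
  | Sum.inl v => m = 3 * kk n v + 2
  | Sum.inr p => inBag n m (kk n p.val.1) (kk n p.val.2)}

lemma mem_bag_inl {n m : ℕ} {v : Fin n × Fin n} : Sum.inl v ∈ bag n m ↔ m = 3 * kk n v + 2 := Iff.rfl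
lemma mem_bag_inr {n m : ℕ} {p : {p : (Fin n × Fin n) × (Fin n × Fin n) // (grid n).Adj p.1 p.2}} :
    Sum.inr p ∈ bag n m ↔ inBag n m (kk n p.val.1) (kk n p.val.2) := Iff.rfl

/-! ### Connectivity of bag supports -/

lemma induce_reach {S : Set ℕ} {x y : ℕ} (hx : x ∈ S) (hy : y ∈ S) (h : cat.Adj x y) :
    (cat.induce S).Reachable ⟨x, hx⟩ ⟨y, hy⟩ :=
  SimpleGraph.Adj.reachable (show (cat.induce S).Adj ⟨x, hx⟩ ⟨y, hy⟩ from h)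

lemma connected_of_all_reach {S : Set ℕ} (x0 : S)
    (h : ∀ y : S, (cat.induce S).Reachable x0 y) : (cat.induce S).Connected :=
  (connected_iff _).mpr ⟨fun a b => (h a).symm.trans (h b), ⟨x0⟩⟩

lemma triple_conn (x0 x1 x2 : ℕ) (h01 : cat.Adj x0 x1) (h02 : cat.Adj x0 x2) (S : Set ℕ)
    (hS : ∀ m, m ∈ S ↔ (m = x0 ∨ m = x1 ∨ m = x2)) : (cat.induce S).Connected := by
  have hx0 : x0 ∈ S := (hS x0).mpr (Or.inl rfl)
  apply connected_of_all_reach ⟨x0, hx0⟩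
  rintro ⟨y, hy⟩
  rcases (hS y).mp hy with rfl | rfl | rfl
  · exact Reachable.refl _
  · exact induce_reach hx0 hy h01
  · exact induce_reach hx0 hy h02

lemma down_conn (n a : ℕ) (hn : 1 ≤ n) (S : Set ℕ)
    (hS : ∀ m, m ∈ S ↔ ((m % 3 = 0 ∧ a < m/3 ∧ m/3 ≤ a+n) ∨ (m % 3 = 1 ∧ a ≤ m/3 ∧ m/3 < a+n) ∨ m = 3*a+2)) :
    (cat.induce S).Connected := by
  have hbase : (3*a+1) ∈ S := by rw [hS]; omega
  have key : ∀ m (hm : m ∈ S), (cat.induce S).Reachable ⟨3*a+1, hbase⟩ ⟨m, hm⟩ := by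
    intro m
    induction m using Nat.strong_induction_on with
    | _ m ih =>
      intro hm
      have hm' := (hS m).mp hm
      by_cases hLeaf : m = 3*a+2
      · subst hLeaf
        exact induce_reach hbase hm (by rw [cat_adj]; omega)
      · by_cases h1 : m % 3 = 1
        · by_cases hj : m = 3*a+1
          · subst hj; exact Reachable.refl _
          · have hprev : (m - 1) ∈ S := by rw [hS]; omega
            have hadj : cat.Adj (m-1) m := by rw [cat_adj]; omega
            exact (ih (m-1) (by omega) hprev).trans (induce_reach hprev hm hadj)
        · -- m % 3 = 0
          have hprev : (m - 2) ∈ S := by rw [hS]; omega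
          have hadj : cat.Adj (m-2) m := by rw [cat_adj]; omega
          exact (ih (m-2) (by omega) hprev).trans (induce_reach hprev hm hadj)
  exact connected_of_all_reach ⟨3*a+1, hbase⟩ (fun y => key y.1 y.2)

lemma bags_connected (n : ℕ) (hn : 2 ≤ n) :
    ∀ x : GridPlusVert n, (cat.induce {i | x ∈ bag n i}).Connected := by
  intro x
  rcases x with v | p
  · have hmem : (3 * kk n v + 2) ∈ {i | Sum.inl v ∈ bag n i} := by
      simp only [Set.mem_setOf_eq, mem_bag_inl]
    apply connected_of_all_reach ⟨_, hmem⟩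
    rintro ⟨y, hy⟩
    have : y = 3 * kk n v + 2 := hy
    subst this
    exact Reachable.refl _
  · set a := kk n p.val.1 with ha
    set b := kk n p.val.2 with hb
    have hmemiff : ∀ m, (m ∈ {i | Sum.inr p ∈ bag n i}) ↔ inBag n m a b := fun m => Iff.rfl
    rcases grid_adj_kk p.2 with hd | hd | hd | hd
    · -- right : b = a + 1
      refine triple_conn (3*a+1) (3*a+2) (3*a+3) (by rw [cat_adj]; omega) (by rw [cat_adj]; omega) _ ?_
      intro m
      rw [hmemiff]
      unfold inBag
      omega
    · -- down : b = a + n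
      apply down_conn n a (by omega)
      intro m
      rw [hmemiff]
      unfold inBag
      omega
    · -- left : a = b + 1
      refine triple_conn (3*a+1) (3*a) (3*a+2) (by rw [cat_adj]; omega) (by rw [cat_adj]; omega) _ ?_
      intro m
      rw [hmemiff]
      unfold inBag
      omega
    · -- up : a = b + n
      refine triple_conn (3*a+1) (3*a) (3*a+2) (by rw [cat_adj]; omega) (by rw [cat_adj]; omega) _ ?_
      intro m
      rw [hmemiff]
      unfold inBag
      omega

/-! ### Edge coverage -/

lemma edge_subset (n : ℕ) (hn : 2 ≤ n) :
    ∀ u v, (gridPlus n).Adj u v → ∃ i, u ∈ bag n i ∧ v ∈ bag n i := by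
  intro u v h
  unfold gridPlus at h
  rw [SimpleGraph.fromRel_adj] at h
  obtain ⟨hne, hrel⟩ := h
  rcases u with w | p <;> rcases v with w' | q
  · rcases hrel with h | h <;> exact False.elim h
  · have hw : w = q.val.1 := by
      rcases hrel with h | h
      · exact h
      · exact False.elim h
    subst hw
    refine ⟨3 * kk n q.val.1 + 2, mem_bag_inl.mpr rfl, ?_⟩
    rw [mem_bag_inr]
    rcases grid_adj_kk q.2 with hd | hd | hd | hd <;> (unfold inBag; omega)
  · have hw : w' = p.val.1 := by
      rcases hrel with h | h
      · exact False.elim h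
      · exact h
    subst hw
    refine ⟨3 * kk n p.val.1 + 2, ?_, mem_bag_inl.mpr rfl⟩
    rw [mem_bag_inr]
    rcases grid_adj_kk p.2 with hd | hd | hd | hd <;> (unfold inBag; omega)
  · have hpq : p.val.1 = q.val.2 ∧ p.val.2 = q.val.1 := by
      rcases hrel with h | h; exacts [h, ⟨h.2.symm, h.1.symm⟩]
    have e1 : kk n q.val.1 = kk n p.val.2 := by rw [hpq.2]
    have e2 : kk n q.val.2 = kk n p.val.1 := by rw [hpq.1]
    rcases grid_adj_kk p.2 with hd | hd | hd | hd
    · refine ⟨3 * (kk n p.val.1 + 1), ?_, ?_⟩ <;> (rw [mem_bag_inr]; unfold inBag; omega)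
    · refine ⟨3 * kk n p.val.2, ?_, ?_⟩ <;> (rw [mem_bag_inr]; unfold inBag; omega)
    · refine ⟨3 * kk n p.val.1, ?_, ?_⟩ <;> (rw [mem_bag_inr]; unfold inBag; omega)
    · refine ⟨3 * kk n p.val.1, ?_, ?_⟩ <;> (rw [mem_bag_inr]; unfold inBag; omega)


/-! ### Cardinality bounds -/

lemma ncard_le_of_injOn {α : Type*} (s : Set α) (f : α → ℕ) (m : ℕ)
    (hf : ∀ x ∈ s, f x < m) (hinj : Set.InjOn f s) : s.ncard ≤ m := by
  have h1 : (f '' s).ncard = s.ncard := Set.ncard_image_of_injOn hinj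
  have h2 : f '' s ⊆ Set.Iio m := by rintro _ ⟨x, hx, rfl⟩; exact hf x hx
  have h3 : (Set.Iio m).ncard = m := by
    rw [← Finset.coe_range, Set.ncard_coe_finset, Finset.card_range]
  calc s.ncard = (f '' s).ncard := h1.symm
    _ ≤ (Set.Iio m).ncard := Set.ncard_le_ncard h2 (Set.finite_Iio m)
    _ = m := h3

set_option maxHeartbeats 2000000 in
lemma bag_card (n : ℕ) (hn : 2 ≤ n) (m : ℕ) : (bag n m).ncard ≤ n + 3 := by
  by_cases h2 : m % 3 = 2
  · -- leaf bag : at most 5 elements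
    apply ncard_le_of_injOn _ (Sum.elim (fun _ => 0) (fun p =>
      if kk n p.val.2 = kk n p.val.1 + n then 1
      else if kk n p.val.1 = kk n p.val.2 + n then 2
      else if kk n p.val.2 = kk n p.val.1 + 1 then 3 else 4)) (n+3)
    · intro x hx
      rcases x with v | p
      · simp only [Sum.elim_inl]; omega
      · simp only [Sum.elim_inr]; split_ifs <;> omega
    · intro x hx y hy hxy
      rcases x with v | p <;> rcases y with w | q
      · have hx' : m = 3 * kk n v + 2 := hx
        have hy' : m = 3 * kk n w + 2 := hy
        exact congrArg Sum.inl (kk_inj (by omega))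
      · simp only [Sum.elim_inl, Sum.elim_inr] at hxy
        split_ifs at hxy <;> omega
      · simp only [Sum.elim_inl, Sum.elim_inr] at hxy
        split_ifs at hxy <;> omega
      · have hp := grid_adj_kk p.2
        have hq := grid_adj_kk q.2
        have hx' : inBag n m (kk n p.val.1) (kk n p.val.2) := hx
        have hy' : inBag n m (kk n q.val.1) (kk n q.val.2) := hy
        unfold inBag at hx' hy'
        simp only [Sum.elim_inr] at hxy
        have key : kk n p.val.1 = kk n q.val.1 ∧ kk n p.val.2 = kk n q.val.2 := by
          split_ifs at hxy <;> omega
        exact congrArg Sum.inr (Subtype.ext (Prod.ext_iff.mpr ⟨kk_inj key.1, kk_inj key.2⟩))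
  · -- spine bag
    have hcc : ∃ c : ℕ, (m % 3 = 0 → c = m/3 - n) ∧ (m % 3 = 1 → c = m/3 + 1 - n) := by
      by_cases h0 : m % 3 = 0
      · exact ⟨m/3 - n, fun _ => rfl, fun h1 => by omega⟩
      · exact ⟨m/3 + 1 - n, fun h0' => by omega, fun _ => rfl⟩
    obtain ⟨c, hc0, hc1⟩ := hcc
    have hc : (m % 3 = 0 ∧ c = m/3 - n) ∨ (m % 3 = 1 ∧ c = m/3 + 1 - n) := by
      by_cases h0 : m % 3 = 0
      · exact Or.inl ⟨h0, hc0 h0⟩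
      · have h1 : m % 3 = 1 := by omega
        exact Or.inr ⟨h1, hc1 h1⟩
    clear hc0 hc1
    apply ncard_le_of_injOn _ (Sum.elim (fun _ => 0) (fun p =>
      if kk n p.val.2 = kk n p.val.1 + n then kk n p.val.1 - c
      else if kk n p.val.1 = kk n p.val.2 + n then n
      else if kk n p.val.2 = kk n p.val.1 + 1 then n+1 else n+2)) (n+3)
    · intro x hx
      rcases x with v | p
      · simp only [Sum.elim_inl]; omega
      · have hp := grid_adj_kk p.2
        have hx' : inBag n m (kk n p.val.1) (kk n p.val.2) := hx
        unfold inBag at hx'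
        simp only [Sum.elim_inr]; split_ifs <;> omega
    · intro x hx y hy hxy
      rcases x with v | p <;> rcases y with w | q
      · have hx' : m = 3 * kk n v + 2 := hx
        exact absurd hx' (by omega)
      · have hx' : m = 3 * kk n v + 2 := hx
        exact absurd hx' (by omega)
      · have hy' : m = 3 * kk n w + 2 := hy
        exact absurd hy' (by omega)
      · have hp := grid_adj_kk p.2
        have hq := grid_adj_kk q.2
        have hx' : inBag n m (kk n p.val.1) (kk n p.val.2) := hx
        have hy' : inBag n m (kk n q.val.1) (kk n q.val.2) := hy
        unfold inBag at hx' hy'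
        simp only [Sum.elim_inr] at hxy
        have key : kk n p.val.1 = kk n q.val.1 ∧ kk n p.val.2 = kk n q.val.2 := by
          split_ifs at hxy <;> omega
        exact congrArg Sum.inr (Subtype.ext (Prod.ext_iff.mpr ⟨kk_inj key.1, kk_inj key.2⟩))

lemma bag_inl_card (n m : ℕ) : ({x ∈ bag n m | ∃ v, x = Sum.inl v} :
    Set (GridPlusVert n)).ncard ≤ 1 := by
  have hsub : ({x ∈ bag n m | ∃ v, x = Sum.inl v} : Set (GridPlusVert n)).Subsingleton := by
    rintro x ⟨hx, v, rfl⟩ y ⟨hy, w, rfl⟩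
    have hx' : m = 3 * kk n v + 2 := hx
    have hy' : m = 3 * kk n w + 2 := hy
    exact congrArg Sum.inl (kk_inj (by omega))
  rcases hsub.eq_empty_or_singleton with h | ⟨x, h⟩ <;> rw [h] <;>
    simp [Set.ncard_empty, Set.ncard_singleton]

lemma leaf_bag (n : ℕ) (hn : 2 ≤ n) (m : ℕ) (v : Fin n × Fin n) (hv : Sum.inl v ∈ bag n m) :
    bag n m = {Sum.inl v} ∪
      {x | ∃ p : {p : (Fin n × Fin n) × (Fin n × Fin n) // (grid n).Adj p.1 p.2},
        p.val.1 = v ∧ x = Sum.inr p} := by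
  have hm : m = 3 * kk n v + 2 := hv
  ext x
  simp only [Set.mem_union, Set.mem_singleton_iff, Set.mem_setOf_eq]
  constructor
  · intro hx
    rcases x with w | p
    · left
      have hx' : m = 3 * kk n w + 2 := hx
      exact congrArg Sum.inl (kk_inj (by omega))
    · right
      have hx' : inBag n m (kk n p.val.1) (kk n p.val.2) := hx
      refine ⟨p, ?_, rfl⟩
      apply kk_inj
      unfold inBag at hx'
      omega
  · rintro (rfl | ⟨p, hp, rfl⟩)
    · exact hv
    · show inBag n m (kk n p.val.1) (kk n p.val.2)
      have he : kk n p.val.1 = kk n v := by rw [hp]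
      rcases grid_adj_kk p.2 with hd | hd | hd | hd <;> (unfold inBag; omega)

lemma leaf_unique_nbr (n m : ℕ) (v : Fin n × Fin n) (hv : Sum.inl v ∈ bag n m) :
    ∃! j, cat.Adj m j := by
  have hm : m = 3 * kk n v + 2 := hv
  refine ⟨m - 1, by show cat.Adj m (m-1); rw [cat_adj]; omega, ?_⟩
  intro j hj
  rw [cat_adj] at hj
  omega

end TD14

theorem stmt14 (n : ℕ) (hn : 2 ≤ n) :
    ∃ (ι : Type) (td : TreeDecomp (gridPlus n) ι),
      (∀ i, (td.bag i).ncard ≤ n + 3) ∧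
      (∀ i, ({x ∈ td.bag i | ∃ v, x = Sum.inl v}).ncard ≤ 1) ∧
      (∀ i (v : Fin n × Fin n), Sum.inl v ∈ td.bag i →
        (td.bag i = {Sum.inl v} ∪
          {x | ∃ p : {p : (Fin n × Fin n) × (Fin n × Fin n) // (grid n).Adj p.1 p.2},
            p.val.1 = v ∧ x = Sum.inr p}) ∧
        (∃! j, td.T.Adj i j)) := by
  refine ⟨ℕ, ⟨TD14.cat, TD14.cat_isTree, TD14.bag n, TD14.bags_connected n hn,
    TD14.edge_subset n hn⟩, ?_, ?_, ?_⟩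
  · exact fun i => TD14.bag_card n hn i
  · exact fun i => TD14.bag_inl_card n i
  · exact fun i v hv => ⟨TD14.leaf_bag n hn i v hv, TD14.leaf_unique_nbr n i v hv⟩
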